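/- arXiv:2110.02188 — 2 statements merged into one kernel-verified Lean document; each statement's English description precedes it below -/
import Mathlib

section
/- Let u, v ≥ 2 be integers with uv ≠ 4, and define f_{u,v} on admissible finite integer sequences recursively by: f_{u,v}(⟦q₀⟧) = ⟦q₀⟧; if v ∤ q₀ and q₁ = 1, f_{u,v}(⟦q₀,...,q_r⟧) = ⟦q₀+1⟧ ⊕ (−f_{v,u}(⟦q₂+1,q₃,...,q_r⟧)); if v ∤ q₀, q₁ = 2, r > 1, f_{u,v}(⟦q₀,...,q_r⟧) = ⟦q₀+1⟧ ⊕ f_{v,u}(⟦−2,q₂+1,q₃,...,q_r⟧); if v ∤ q₀, q₁ = 2, r = 1, f_{u,v}(⟦q₀,2⟧) = ⟦q₀+1,−2⟧; otherwise f_{u,v}(⟦q₀,...,q_r⟧) = ⟦q₀⟧ ⊕ f_{v,u}(⟦q₁,...,q_r⟧). Then f_{u,v} preserves the evaluation: E(f_{u,v}(s)) = E(s) for every s in its domain A₁. -/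
/-- Evaluation of a finite continued fraction `[q₀, q₁, …, q_r]`. -/
def E : List ℤ → ℚ
  | [] => 0
  | [q] => (q : ℚ)
  | q :: l => (q : ℚ) + 1 / E l

/-- Concatenation `⊕` of finite sequences, merging when the second begins with `0`. -/
def oplus (a b : List ℤ) : List ℤ :=
  match b with
  | [] => a
  | p :: ps =>
    if p = 0 then
      match ps with
      | [] => a
      | p1 :: ps' => a.dropLast ++ (a.getLast! + p1) :: ps'
    else a ++ (p :: ps)

/-- No tail continued fraction `[q_i, …, q_r]` (for `0 < i < r`) evaluates to `0`. -/
def TailsNonzero (l : List ℤ) : Prop :=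
  ∀ i, 0 < i → i + 1 < l.length → E (l.drop i) ≠ 0

/-- `[q₀, …, q_r]` is a short continued fraction: `q_i ≥ 1` for `0 < i < r`, `q_r > 1` if `r > 0`. -/
def IsShortCF (l : List ℤ) : Prop :=
  l ≠ [] ∧ (∀ i, 0 < i → i + 1 < l.length → 1 ≤ l.getD i 0) ∧
    (1 < l.length → 1 < l.getD (l.length - 1) 0)

/-- Membership in `A₁`. -/
def memA1 (l : List ℤ) : Prop := IsShortCF l ∧ TailsNonzero l

/-- Membership in `A₂`: all entries after the first have absolute value `> 1`. -/
def memA2 (l : List ℤ) : Prop :=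
  l ≠ [] ∧ (∀ i, 0 < i → i < l.length → 1 < |l.getD i 0|) ∧ TailsNonzero l

/-- The `(u,v)`-divisibility property: `v` divides even-indexed entries, `u` odd-indexed ones. -/
def DivProp (u v : ℤ) (l : List ℤ) : Prop :=
  ∀ i, i < l.length → (if i % 2 = 0 then v else u) ∣ l.getD i 0

/-- The function `f_{u,v} : A₁ → A₂`. -/
def fCF (u v : ℤ) : List ℤ → List ℤ
  | [] => []
  | [q0] => [q0]
  | q0 :: q1 :: rest =>
    if ¬ (v ∣ q0) ∧ q1 = 1 then
      match rest with
      | [] => [q0 + 1]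
      | q2 :: rest' => oplus [q0 + 1] ((fCF v u ((q2 + 1) :: rest')).map (fun x => -x))
    else if ¬ (v ∣ q0) ∧ q1 = 2 then
      match rest with
      | [] => [q0 + 1, -2]
      | q2 :: rest' => oplus [q0 + 1] (fCF v u (-2 :: (q2 + 1) :: rest'))
    else oplus [q0] (fCF v u (q1 :: rest))
termination_by l => l.length
decreasing_by all_goals (simp_all [List.length]; try omega)

/-- The function `g_{u,v} : A₂ → A₁`. -/
def gCF (u v : ℤ) : List ℤ → List ℤ
  | [] => []
  | [q0] => [q0]
  | q0 :: q1 :: rest =>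
    if (q1 < 0 ∧ u ≠ 2) ∨ (q1 < -2 ∧ u = 2) then
      oplus [q0 - 1, 1] ((gCF v u (((q1 + 1) :: rest).map (fun x => -x))))
    else if q1 = -2 ∧ u = 2 then
      match rest with
      | [] => [q0 - 1, 2]
      | q2 :: rest' => oplus [q0 - 1, 2] (gCF v u ((q2 - 1) :: rest'))
    else oplus [q0] (gCF v u (q1 :: rest))
termination_by l => l.length
decreasing_by all_goals (simp_all [List.length]; try omega)

section CFAux

private lemma E_nil' : E [] = 0 := rfl
private lemma E_single' (q : ℤ) : E [q] = (q:ℚ) := rfl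
private lemma E_cons' (q : ℤ) {l : List ℤ} (h : l ≠ []) : E (q::l) = (q:ℚ) + 1 / E l := by
  cases l with
  | nil => simp at h
  | cons a t => rfl

private lemma E_neg' (l : List ℤ) : E (l.map (fun x => -x)) = -E l := by
  induction l with
  | nil => simp [E_nil']
  | cons a t ih =>
    cases t with
    | nil => simp [E_single']
    | cons b t' =>
      rw [List.map_cons, E_cons' (-a) (by simp), ih, E_cons' a (by simp)]
      push_cast
      rw [div_neg]
      ring

private lemma E_succ_head (q : ℤ) (l : List ℤ) : E ((q+1)::l) = E (q::l) + 1 := by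
  cases l with
  | nil => rw [E_single' (q+1), E_single' q]; push_cast; ring
  | cons b t' =>
    rw [E_cons' (q+1) (by simp), E_cons' q (by simp)]; push_cast; ring

/-- tail-admissibility predicate -/
def GoodCF : List ℤ → Prop
  | [] => False
  | [q] => 1 < q
  | q :: l => 1 ≤ q ∧ GoodCF l

private lemma GoodCF_head {q : ℤ} {l : List ℤ} (h : GoodCF (q::l)) : 1 ≤ q := by
  cases l with
  | nil => have : 1 < q := h; omega
  | cons b t => exact h.1

private lemma GoodCF_tail {q : ℤ} {l : List ℤ} (h : GoodCF (q::l)) : l = [] ∨ GoodCF l := by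
  cases l with
  | nil => exact Or.inl rfl
  | cons b t => exact Or.inr h.2

private lemma GoodCF_succ_head {q : ℤ} {l : List ℤ} (h : GoodCF (q::l)) : GoodCF ((q+1)::l) := by
  cases l with
  | nil => have : 1 < q := h; show 1 < q + 1; omega
  | cons b t => exact ⟨by have := h.1; omega, h.2⟩

private lemma one_lt_E {l : List ℤ} (h : GoodCF l) : 1 < E l := by
  induction l with
  | nil => exact absurd h (by simp [GoodCF])
  | cons a t ih =>
    cases t with
    | nil =>
      have : 1 < a := h
      rw [E_single']; exact_mod_cast this
    | cons b t' =>
      have h1 : 1 ≤ a := h.1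
      have h2 := ih h.2
      rw [E_cons' a (by simp)]
      have hpos : 0 < 1 / E (b::t') := one_div_pos.mpr (by linarith)
      have h1' : (1:ℚ) ≤ (a:ℚ) := by exact_mod_cast h1
      linarith

private lemma oplus_single {a p : ℤ} {ps : List ℤ} (h : p ≠ 0) :
    oplus [a] (p::ps) = a::p::ps := by
  simp [oplus, h]

private lemma fCF_A {u v q0 : ℤ} (h : ¬ (v ∣ q0)) (q2 : ℤ) (rest' : List ℤ) :
    fCF u v (q0::1::q2::rest') =
      oplus [q0 + 1] ((fCF v u ((q2 + 1) :: rest')).map (fun x => -x)) := by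
  rw [fCF.eq_def]; simp [h]

private lemma fCF_B2 {u v q0 : ℤ} (h : ¬ (v ∣ q0)) :
    fCF u v [q0, 2] = [q0 + 1, -2] := by
  rw [fCF.eq_def]; simp [h]

private lemma fCF_B {u v q0 : ℤ} (h : ¬ (v ∣ q0)) (q2 : ℤ) (rest' : List ℤ) :
    fCF u v (q0::2::q2::rest') =
      oplus [q0 + 1] (fCF v u (-2 :: (q2 + 1) :: rest')) := by
  rw [fCF.eq_def]; simp [h]

private lemma fCF_C {u v q0 q1 : ℤ} {rest : List ℤ}
    (h : ¬ (¬ (v ∣ q0) ∧ q1 = 1)) (h' : ¬ (¬ (v ∣ q0) ∧ q1 = 2)) :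
    fCF u v (q0::q1::rest) = oplus [q0] (fCF v u (q1 :: rest)) := by
  rw [fCF.eq_def]; simp [h, h']

private lemma cf_aux1 (x : ℚ) (hx : 1 < x) : 1 / -(x+1) = 1/(1+1/x) - 1 := by
  have hx0 : x ≠ 0 := by linarith
  have hx1 : x + 1 ≠ 0 := by linarith
  have h1 : (1:ℚ) + 1/x = (x+1)/x := by
    rw [eq_div_iff hx0, add_mul, one_mul, one_div, inv_mul_cancel₀ hx0]
  have h2 : x/(x+1) - 1 = (x - (x+1))/(x+1) := by rw [sub_div, div_self hx1]
  rw [h1, one_div_div, h2, show x - (x+1) = (-1:ℚ) from by ring, div_neg, neg_div]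

private lemma cf_aux2 (x : ℚ) (hx : 1 < x) : 1 / (-2 + 1/(x+1)) = 1/(2+1/x) - 1 := by
  have hx0 : x ≠ 0 := by linarith
  have hx1 : x + 1 ≠ 0 := by linarith
  have hy : 2*x + 1 ≠ 0 := by linarith
  have h1 : (2:ℚ) + 1/x = (2*x+1)/x := by
    rw [eq_div_iff hx0, add_mul, one_div, inv_mul_cancel₀ hx0]
  have h2 : (-2:ℚ) + 1/(x+1) = (-(2*x+1))/(x+1) := by
    rw [eq_div_iff hx1, add_mul, one_div, inv_mul_cancel₀ hx1]; ring
  have h3 : x/(2*x+1) - 1 = (x - (2*x+1))/(2*x+1) := by rw [sub_div, div_self hy]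
  rw [h1, h2, one_div_div, one_div_div, h3,
    show x - (2*x+1) = -(x+1) from by ring, div_neg, neg_div]

private lemma key (n : ℕ) : ∀ (u v q0 : ℤ) (t : List ℤ), t.length < n →
    (t = [] ∨ GoodCF t) →
    fCF u v (q0::t) ≠ [] ∧
      ((fCF u v (q0::t)).head? = some q0 ∨ (fCF u v (q0::t)).head? = some (q0+1)) ∧
      E (fCF u v (q0::t)) = E (q0::t) := by
  induction n with
  | zero => intro u v q0 t hlen; omega
  | succ n IH =>
    intro u v q0 t hlen ht
    cases t with
    | nil => refine ⟨by simp [fCF], Or.inl (by simp [fCF]), by simp [fCF]⟩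
    | cons q1 rest =>
      have hgt : GoodCF (q1::rest) := ht.resolve_left (by simp)
      have hq1 : 1 ≤ q1 := GoodCF_head hgt
      by_cases h1 : ¬ (v ∣ q0) ∧ q1 = 1
      · obtain ⟨hv0, rfl⟩ := h1
        cases rest with
        | nil => exact absurd hgt (by simp [GoodCF])
        | cons q2 rest' =>
          have hg2 : GoodCF (q2::rest') := (hgt.2 : _)
          have hq2 : 1 ≤ q2 := GoodCF_head hg2
          have hx : 1 < E (q2::rest') := one_lt_E hg2
          obtain ⟨hne, hhead, hE⟩ := IH v u (q2+1) rest' (by simp at hlen ⊢; omega)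
            (GoodCF_tail hg2)
          obtain ⟨p, ps, hs⟩ := List.exists_cons_of_ne_nil hne
          have hp : p = q2 + 1 ∨ p = q2 + 2 := by
            rw [hs] at hhead; simp at hhead; omega
          have hp0 : -p ≠ 0 := by omega
          rw [fCF_A hv0, hs, List.map_cons, oplus_single hp0, ← List.map_cons, ← hs]
          have hmne : (fCF v u ((q2+1)::rest')).map (fun x => -x) ≠ [] := by
            simp [hs]
          refine ⟨by simp, Or.inr (by rw [hs]; simp), ?_⟩
          rw [E_cons' (q0+1) hmne, E_neg', hE, E_succ_head,
            E_cons' q0 (by simp), E_cons' 1 (by simp)]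
          set x := E (q2::rest') with hxdef
          clear_value x
          push_cast
          linarith [cf_aux1 x hx]
      · by_cases h2 : ¬ (v ∣ q0) ∧ q1 = 2
        · obtain ⟨hv0, rfl⟩ := h2
          cases rest with
          | nil =>
            rw [fCF_B2 hv0]
            refine ⟨by simp, Or.inr (by simp), ?_⟩
            rw [E_cons' (q0+1) (by simp), E_single' (-2), E_cons' q0 (by simp),
              E_single' 2]
            push_cast; linarith
          | cons q2 rest' =>
            have hg2 : GoodCF (q2::rest') := (hgt.2 : _)
            have hq2 : 1 ≤ q2 := GoodCF_head hg2
            have hx : 1 < E (q2::rest') := one_lt_E hg2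
            obtain ⟨hne, hhead, hE⟩ := IH v u (-2) ((q2+1)::rest')
              (by simp at hlen ⊢; omega) (Or.inr (GoodCF_succ_head hg2))
            obtain ⟨p, ps, hs⟩ := List.exists_cons_of_ne_nil hne
            have hp : p = -2 ∨ p = -1 := by
              rw [hs] at hhead; simp at hhead; omega
            have hp0 : p ≠ 0 := by omega
            rw [fCF_B hv0, hs, oplus_single hp0, ← hs]
            refine ⟨by simp, Or.inr (by rw [hs]; simp), ?_⟩
            rw [E_cons' (q0+1) hne, hE, E_cons' (-2) (by simp), E_succ_head,
              E_cons' q0 (by simp), E_cons' 2 (by simp)]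
            set x := E (q2::rest') with hxdef
            clear_value x
            push_cast
            linarith [cf_aux2 x hx]
        · obtain ⟨hne, hhead, hE⟩ := IH v u q1 rest (by simp at hlen ⊢; omega)
            (GoodCF_tail hgt)
          obtain ⟨p, ps, hs⟩ := List.exists_cons_of_ne_nil hne
          have hp0 : p ≠ 0 := by
            rw [hs] at hhead; simp at hhead; omega
          rw [fCF_C h1 h2, hs, oplus_single hp0, ← hs]
          refine ⟨by simp, Or.inl (by rw [hs]; simp), ?_⟩
          rw [E_cons' q0 hne, hE, E_cons' q0 (by simp)]

private lemma goodcf_of : ∀ (t : List ℤ), (∀ i, i + 1 < t.length → 1 ≤ t.getD i 0) →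
    (t ≠ [] → 1 < t.getD (t.length - 1) 0) → t = [] ∨ GoodCF t := by
  intro t
  induction t with
  | nil => intro _ _; exact Or.inl rfl
  | cons a t' ih =>
    intro hmid hlast
    right
    cases t' with
    | nil =>
      have := hlast (by simp)
      simpa [GoodCF] using this
    | cons b t'' =>
      refine ⟨by simpa using hmid 0 (by simp), ?_⟩
      refine (ih ?_ ?_).resolve_left (by simp)
      · intro i hi
        have := hmid (i+1) (by simp at hi ⊢; omega)
        simpa using this
      · intro _
        have h := hlast (by simp)
        have hlen : (a::b::t'').length - 1 = ((b::t'').length - 1) + 1 := by simp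
        rw [hlen, List.getD_cons_succ] at h
        exact h

end CFAux
/-- For `u, v ≥ 2` with `uv ≠ 4`, the function `f_{u,v}` preserves the evaluation
of every sequence in `A₁`. -/
theorem E_fCF (u v : ℤ) (hu : 2 ≤ u) (hv : 2 ≤ v) (huv : u * v ≠ 4)
    (l : List ℤ) (hl : memA1 l) :
    E (fCF u v l) = E l := by
  obtain ⟨⟨hne, hmid, hlast⟩, -⟩ := hl
  obtain ⟨q0, t, rfl⟩ := List.exists_cons_of_ne_nil hne
  have hmid' : ∀ i, i + 1 < t.length → 1 ≤ t.getD i 0 := by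
    intro i hi
    have := hmid (i+1) (by omega) (by simp; omega)
    simpa using this
  have hlast' : t ≠ [] → 1 < t.getD (t.length - 1) 0 := by
    intro hne'
    have hlen1 : 1 < (q0::t).length := by
      cases t with
      | nil => simp at hne'
      | cons a b => simp
    have h := hlast hlen1
    have h1 : (q0::t).length - 1 = (t.length - 1) + 1 := by
      cases t with
      | nil => simp at hne'
      | cons a b => simp
    rw [h1, List.getD_cons_succ] at h
    exact h
  exact (key (t.length + 1) u v q0 t (by omega) (goodcf_of t hmid' hlast')).2.2
end

section
/- (Sanov) The group generated by L₂ = [[1,0],[2,1]] and R₂ = [[1,2],[0,1]] is exactly the set of matrices [[1+4n₁, 2n₂],[2n₃, 1+4n₄]] in SL₂(ℤ) with n₁, n₂, n₃, n₄ ∈ ℤ. -/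
abbrev SL2 := Matrix.SpecialLinearGroup (Fin 2) ℤ

/-- `L_u = [[1,0],[u,1]]`. -/
def Lmat (u : ℤ) : SL2 :=
  ⟨!![1, 0; u, 1], by simp [Matrix.det_fin_two_of]⟩

/-- `R_v = [[1,v],[0,1]]`. -/
def Rmat (v : ℤ) : SL2 :=
  ⟨!![1, v; 0, 1], by simp [Matrix.det_fin_two_of]⟩

/-- The set `𝒢_{u,v}`. -/
def Gscr (u v : ℤ) : Set SL2 :=
  {M | ∃ n1 n2 n3 n4 : ℤ,
    (M : Matrix (Fin 2) (Fin 2) ℤ) = !![1 + u*v*n1, v*n2; u*n3, 1 + u*v*n4]}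

/-- The group `G_{u,v}` generated by `L_u` and `R_v`. -/
def Guv (u v : ℤ) : Subgroup SL2 := Subgroup.closure {Lmat u, Rmat v}

/-- Alternating product `R^{a₀} L^{a₁} R^{a₂} ⋯` from a list of exponents
(the boolean records whether the next factor is a power of `R`). -/
def altProd (u v : ℤ) : Bool → List ℤ → SL2
  | _, [] => 1
  | true, a :: l => (Rmat v) ^ a * altProd u v false l
  | false, a :: l => (Lmat u) ^ a * altProd u v true l

lemma Lmat_mul (u w : ℤ) : Lmat u * Lmat w = Lmat (u + w) := by
  ext i j
  rw [Matrix.SpecialLinearGroup.coe_mul]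
  simp only [Lmat, Matrix.SpecialLinearGroup.coe_mul, Matrix.mul_fin_two]
  fin_cases i <;> fin_cases j <;> simp

lemma Rmat_mul (u w : ℤ) : Rmat u * Rmat w = Rmat (u + w) := by
  ext i j
  rw [Matrix.SpecialLinearGroup.coe_mul]
  simp only [Rmat, Matrix.SpecialLinearGroup.coe_mul, Matrix.mul_fin_two]
  fin_cases i <;> fin_cases j <;> simp [add_comm]

lemma Lmat_zero : Lmat 0 = 1 := by
  ext i j; fin_cases i <;> fin_cases j <;> simp [Lmat]

lemma Rmat_zero : Rmat 0 = 1 := by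
  ext i j; fin_cases i <;> fin_cases j <;> simp [Rmat]

lemma Lmat_inv (u : ℤ) : (Lmat u)⁻¹ = Lmat (-u) := by
  rw [inv_eq_iff_mul_eq_one, Lmat_mul]; simp [Lmat_zero]

lemma Rmat_inv (u : ℤ) : (Rmat u)⁻¹ = Rmat (-u) := by
  rw [inv_eq_iff_mul_eq_one, Rmat_mul]; simp [Rmat_zero]

lemma Lmat_zpow (u : ℤ) (n : ℤ) : (Lmat u) ^ n = Lmat (u * n) := by
  induction n using Int.induction_on with
  | zero => simp [Lmat_zero]
  | succ k ih => rw [zpow_add_one, ih, Lmat_mul]; ring_nf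
  | pred k ih => rw [zpow_sub_one, ih, Lmat_inv, Lmat_mul]; ring_nf

lemma Rmat_zpow (u : ℤ) (n : ℤ) : (Rmat u) ^ n = Rmat (u * n) := by
  induction n using Int.induction_on with
  | zero => simp [Rmat_zero]
  | succ k ih => rw [zpow_add_one, ih, Rmat_mul]; ring_nf
  | pred k ih => rw [zpow_sub_one, ih, Rmat_inv, Rmat_mul]; ring_nf

/-- `𝒢_{2,2}` is a subgroup. -/
def GscrSub : Subgroup SL2 where
  carrier := Gscr 2 2
  one_mem' := ⟨0, 0, 0, 0, by ext i j; fin_cases i <;> fin_cases j <;> simp⟩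
  mul_mem' := by
    rintro A B ⟨a1, a2, a3, a4, hA⟩ ⟨b1, b2, b3, b4, hB⟩
    refine ⟨a1 + b1 + 4*a1*b1 + a2*b3, a2 + b2 + 4*a1*b2 + 4*a2*b4,
      a3 + b3 + 4*a3*b1 + 4*a4*b3, a4 + b4 + 4*a4*b4 + a3*b2, ?_⟩
    rw [Matrix.SpecialLinearGroup.coe_mul, hA, hB, Matrix.mul_fin_two]
    congr 1 <;> ring
  inv_mem' := by
    rintro A ⟨a1, a2, a3, a4, hA⟩
    refine ⟨a4, -a2, -a3, a1, ?_⟩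
    rw [Matrix.SpecialLinearGroup.SL2_inv_expl]
    simp only [hA]
    ext i j
    fin_cases i <;> fin_cases j <;> simp <;> ring

lemma reduce_pos (a : ℤ) (ha : 0 < a) (b : ℤ) : ∃ k : ℤ, |b + 2*a*k| ≤ a := by
  have h2a : (0:ℤ) < 2*a := by omega
  set q := b / (2*a) with hq
  set r := b % (2*a) with hr
  have hrd : r = b - 2*a*q := by rw [hr, hq, Int.emod_def]
  have h0 : 0 ≤ r := Int.emod_nonneg b (by omega)
  have h1 : r < 2*a := Int.emod_lt_of_pos b h2a
  rcases le_or_gt r a with h | h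
  · refine ⟨-q, ?_⟩
    have e : b + 2*a*(-q) = r := by rw [hrd]; ring
    rw [e, abs_le]; omega
  · refine ⟨-q - 1, ?_⟩
    have e : b + 2*a*(-q - 1) = r - 2*a := by rw [hrd]; ring
    rw [e, abs_le]; omega

lemma reduce (a : ℤ) (ha : a ≠ 0) (b : ℤ) : ∃ k : ℤ, (b + 2*a*k).natAbs ≤ a.natAbs := by
  have key : ∃ k : ℤ, |b + 2*a*k| ≤ |a| := by
    rcases lt_or_gt_of_ne ha with h | h
    · obtain ⟨k, hk⟩ := reduce_pos (-a) (by omega) b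
      refine ⟨-k, ?_⟩
      rw [abs_of_neg h]
      convert hk using 2
      ring
    · obtain ⟨k, hk⟩ := reduce_pos a h b
      exact ⟨k, by rwa [abs_of_pos h]⟩
  obtain ⟨k, hk⟩ := key
  rw [Int.abs_eq_natAbs, Int.abs_eq_natAbs] at hk
  exact ⟨k, by exact_mod_cast hk⟩

lemma hL : Lmat 2 ∈ Guv 2 2 := Subgroup.subset_closure (Set.mem_insert _ _)

lemma hR : Rmat 2 ∈ Guv 2 2 := Subgroup.subset_closure (Set.mem_insert_of_mem _ rfl)

lemma key_s14 (N : ℕ) : ∀ M : SL2, ∀ n1 n2 n3 n4 : ℤ,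
    (M : Matrix (Fin 2) (Fin 2) ℤ) = !![1 + 2*2*n1, 2*n2; 2*n3, 1 + 2*2*n4] →
    (1 + 2*2*n1).natAbs + (2*n2).natAbs ≤ N → M ∈ Guv 2 2 := by
  induction N using Nat.strong_induction_on with
  | _ N ih =>
  intro M n1 n2 n3 n4 hM hle
  have hdet : (1 + 2*2*n1) * (1 + 2*2*n4) - (2*n2) * (2*n3) = 1 := by
    have h := M.2
    rw [hM, Matrix.det_fin_two_of] at h
    linarith
  have ha : (1 + 2*2*n1 : ℤ) ≠ 0 := by omega
  rcases eq_or_ne n2 0 with h2 | h2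
  · -- b = 0 : M is a power of L
    subst h2
    have h14 : (1 + 2*2*n1) * (1 + 2*2*n4) = 1 := by linarith
    have h1 : n1 = 0 ∧ n4 = 0 := by
      rcases Int.eq_one_or_neg_one_of_mul_eq_one' h14 with ⟨e1, e2⟩ | ⟨e1, e2⟩ <;> omega
    obtain ⟨e1, e4⟩ := h1
    subst e1; subst e4
    have hMe : M = (Lmat 2) ^ (n3 : ℤ) := by
      rw [Lmat_zpow]
      ext i j
      rw [hM]
      fin_cases i <;> fin_cases j <;> simp [Lmat]
    rw [hMe]
    exact zpow_mem hL _
  · -- b ≠ 0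
    have hb : (2*n2 : ℤ) ≠ 0 := by omega
    rcases lt_trichotomy (1 + 2*2*n1).natAbs (2*n2).natAbs with hcmp | hcmp | hcmp
    · -- |a| < |b| : reduce b using right mult by R^k
      obtain ⟨k, hk⟩ := reduce (1 + 2*2*n1) ha (2*n2)
      have hb' : (2*n2) + 2*(1 + 2*2*n1)*k = 2*(n2 + (1 + 2*2*n1)*k) := by ring
      have hstrict : (2*(n2 + (1 + 2*2*n1)*k)).natAbs < (1 + 2*2*n1).natAbs := by
        rw [hb'] at hk
        omega
      have hM' : ((M * (Rmat 2) ^ k : SL2) : Matrix (Fin 2) (Fin 2) ℤ) =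
          !![1 + 2*2*n1, 2*(n2 + (1 + 2*2*n1)*k); 2*n3, 1 + 2*2*(n4 + n3*k)] := by
        rw [Matrix.SpecialLinearGroup.coe_mul, Rmat_zpow, hM]
        show _ * !![1, 2*k; 0, 1] = _
        rw [Matrix.mul_fin_two]
        congr 1 <;> ring
      have hmem : (M * (Rmat 2) ^ k : SL2) ∈ Guv 2 2 := by
        refine ih ((1 + 2*2*n1).natAbs + (2*(n2 + (1 + 2*2*n1)*k)).natAbs) (by omega)
          _ n1 (n2 + (1 + 2*2*n1)*k) n3 (n4 + n3*k) hM' le_rfl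
      have : M = (M * (Rmat 2) ^ k) * (Rmat 2) ^ (-k) := by
        rw [mul_assoc, ← zpow_add, add_neg_cancel, zpow_zero, mul_one]
      rw [this]
      exact mul_mem hmem (zpow_mem hR _)
    · -- |a| = |b| : impossible by parity
      exact absurd hcmp (by omega)
    · -- |a| > |b| : reduce a using right mult by L^k
      obtain ⟨k, hk⟩ := reduce (2*n2) hb (1 + 2*2*n1)
      have ha' : (1 + 2*2*n1) + 2*(2*n2)*k = 1 + 2*2*(n1 + n2*k) := by ring
      have hlt : (1 + 2*2*(n1 + n2*k)).natAbs < (1 + 2*2*n1).natAbs := by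
        rw [ha'] at hk
        omega
      have hM' : ((M * (Lmat 2) ^ k : SL2) : Matrix (Fin 2) (Fin 2) ℤ) =
          !![1 + 2*2*(n1 + n2*k), 2*n2; 2*(n3 + (1 + 2*2*n4)*k), 1 + 2*2*n4] := by
        rw [Matrix.SpecialLinearGroup.coe_mul, Lmat_zpow, hM]
        show _ * !![1, 0; 2*k, 1] = _
        rw [Matrix.mul_fin_two]
        congr 1 <;> ring
      have hmem : (M * (Lmat 2) ^ k : SL2) ∈ Guv 2 2 := by
        refine ih ((1 + 2*2*(n1 + n2*k)).natAbs + (2*n2).natAbs) (by omega)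
          _ (n1 + n2*k) n2 (n3 + (1 + 2*2*n4)*k) n4 hM' le_rfl
      have : M = (M * (Lmat 2) ^ k) * (Lmat 2) ^ (-k) := by
        rw [mul_assoc, ← zpow_add, add_neg_cancel, zpow_zero, mul_one]
      rw [this]
      exact mul_mem hmem (zpow_mem hL _)

/-- (Sanov) The group generated by `L₂` and `R₂` is exactly `𝒢_{2,2}`. -/
theorem sanov (M : SL2) : M ∈ Guv 2 2 ↔ M ∈ Gscr 2 2 := by
  constructor
  · intro h
    have hsub : ({Lmat 2, Rmat 2} : Set SL2) ⊆ ↑GscrSub := by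
      rintro x (rfl | rfl)
      · exact ⟨0, 0, 1, 0, by ext i j; fin_cases i <;> fin_cases j <;> simp [Lmat]⟩
      · exact ⟨0, 1, 0, 0, by ext i j; fin_cases i <;> fin_cases j <;> simp [Rmat]⟩
    exact (Subgroup.closure_le GscrSub).2 hsub h
  · rintro ⟨n1, n2, n3, n4, hM⟩
    exact key_s14 ((1 + 2*2*n1).natAbs + (2*n2).natAbs) M n1 n2 n3 n4 hM le_rfl
end
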